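/- Let q = 2^m with m ≥ 1 and F_q = GaloisField 2 m. Then the maximum size of an intersecting subset of SL(2,F_q) with respect to the induced action on 2-element subsets of ℙ¹(F_q) is exactly q(q − 1). (Since the stabilizer of a 2-subset has order 2(q − 1), this says the intersection density of this action is q/2.) -/

import Mathlib

open scoped Pointwise MatrixGroups

noncomputable section

/-- The projective line over `K`. -/
abbrev Proj (K : Type*) [Field K] := Projectivization K (Fin 2 → K)

variable {K : Type*} [Field K]

lemma GLmulVecLin_injective (g : GL (Fin 2) K) :
    Function.Injective ((g : Matrix (Fin 2) (Fin 2) K).mulVecLin) := by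
  intro u v huv
  have h := congrArg ((((g⁻¹ : GL (Fin 2) K) : Matrix (Fin 2) (Fin 2) K)).mulVecLin) huv
  simp only [Matrix.mulVecLin_apply, Matrix.mulVec_mulVec] at h
  rw [show ((g⁻¹ : GL (Fin 2) K) : Matrix (Fin 2) (Fin 2) K) * (g : Matrix (Fin 2) (Fin 2) K) = 1
    from g.inv_mul, Matrix.one_mulVec, Matrix.one_mulVec] at h
  exact h

lemma GLmulVec_ne_zero (g : GL (Fin 2) K) {v : Fin 2 → K} (hv : v ≠ 0) :
    (g : Matrix (Fin 2) (Fin 2) K).mulVec v ≠ 0 := by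
  intro h
  apply hv
  have : ((g : Matrix (Fin 2) (Fin 2) K)).mulVecLin v =
      ((g : Matrix (Fin 2) (Fin 2) K)).mulVecLin 0 := by
    simpa [Matrix.mulVecLin_apply] using h
  simpa using GLmulVecLin_injective g this

/-- The action of `GL(2,K)` on the projective line by matrix-vector multiplication on
representatives. -/
instance GLProjAction : MulAction (GL (Fin 2) K) (Proj K) where
  smul g x := Projectivization.map ((g : Matrix (Fin 2) (Fin 2) K).mulVecLin)
    (GLmulVecLin_injective g) x
  one_smul x := by
    induction x using Projectivization.ind with
    | h v hv =>
      show Projectivization.map _ _ _ = _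
      simp [Projectivization.map_mk]
  mul_smul g h x := by
    induction x using Projectivization.ind with
    | h v hv =>
      show Projectivization.map _ _ _ =
        Projectivization.map _ _ (Projectivization.map _ _ _)
      simp [Projectivization.map_mk, Matrix.mulVecLin_apply, Matrix.mulVec_mulVec,
        Units.val_mul]

lemma GL_smul_mk (g : GL (Fin 2) K) (v : Fin 2 → K) (hv : v ≠ 0) :
    g • Projectivization.mk K v hv =
      Projectivization.mk K ((g : Matrix (Fin 2) (Fin 2) K).mulVec v)
        (GLmulVec_ne_zero g hv) := by
  show Projectivization.map _ _ _ = _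
  simp [Projectivization.map_mk, Matrix.mulVecLin_apply]

/-- The action of `SL(2,K)` on the projective line. -/
instance SLProjAction : MulAction (Matrix.SpecialLinearGroup (Fin 2) K) (Proj K) :=
  MulAction.compHom _ (Matrix.SpecialLinearGroup.toGL)

end

noncomputable section
variable {K : Type*} [Field K]

lemma center_smul_eq (c : GL (Fin 2) K) (hc : c ∈ Subgroup.center (GL (Fin 2) K))
    (x : Proj K) : c • x = x := by
  have hcomm : ∀ t : Matrix.TransvectionStruct (Fin 2) K,
      Commute t.toMatrix (c : Matrix (Fin 2) (Fin 2) K) := by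
    intro t
    let u : GL (Fin 2) K := ⟨t.toMatrix, t.inv.toMatrix, t.mul_inv, t.inv_mul⟩
    have h := Subgroup.mem_center_iff.mp hc u
    have := congrArg Units.val h
    simpa [u, Commute, SemiconjBy] using this
  obtain ⟨r, hr⟩ := Matrix.mem_range_scalar_of_commute_transvectionStruct hcomm
  have hr0 : r ≠ 0 := by
    intro h0
    have hne : (![1, 0] : Fin 2 → K) ≠ 0 := by
      intro h
      have := congrFun h 0
      simp at this
    have := GLmulVec_ne_zero c hne
    rw [← hr, h0] at this
    rw [show (0 : K) = (0 : K) from rfl] at this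
    apply this
    funext i
    simp [Matrix.mulVec_diagonal]
  induction x using Projectivization.ind with
  | h v hv =>
    rw [GL_smul_mk]
    rw [Projectivization.mk_eq_mk_iff]
    refine ⟨Units.mk0 r hr0, ?_⟩
    rw [← hr]
    funext i
    simp [Matrix.mulVec_diagonal]

end

noncomputable section

/-- The projective general linear group `PGL(2,K) = GL(2,K)/Z(GL(2,K))`. -/
abbrev PGL2 (K : Type*) [Field K] : Type _ :=
  GL (Fin 2) K ⧸ Subgroup.center (GL (Fin 2) K)

variable {K : Type*} [Field K]

/-- The action of `GL(2,K)` on the projective line descends to `PGL(2,K)`. -/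
instance PGLProjSMul : SMul (PGL2 K) (Proj K) :=
  ⟨fun g x => Quotient.liftOn' g (fun a => a • x) (by
    intro a b hab
    rw [QuotientGroup.leftRel_apply] at hab
    show a • x = b • x
    have hb : b = a * (a⁻¹ * b) := by group
    rw [hb, mul_smul, center_smul_eq _ hab])⟩

instance PGLProjAction : MulAction (PGL2 K) (Proj K) where
  one_smul x := center_smul_eq 1 (Subgroup.one_mem _) x
  mul_smul g h x := by
    induction g using Quotient.inductionOn' with
    | h a =>
      induction h using Quotient.inductionOn' with
      | h b => exact mul_smul a b x

lemma PGL2_smul_mk' (a : GL (Fin 2) K) (x : Proj K) :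
    (QuotientGroup.mk a : PGL2 K) • x = a • x := rfl

/-- The natural homomorphism `SL(2,K) → PGL(2,K)`. -/
def SLtoPGL2 (K : Type*) [Field K] : Matrix.SpecialLinearGroup (Fin 2) K →* PGL2 K :=
  (QuotientGroup.mk' (Subgroup.center (GL (Fin 2) K))).comp Matrix.SpecialLinearGroup.toGL

/-- `PSL(2,K)`, realized as the image of `SL(2,K)` in `PGL(2,K)`. -/
def PSL2 (K : Type*) [Field K] : Subgroup (PGL2 K) := (SLtoPGL2 K).range

/-- A subset `F` of a group `G` acting on the projective line over `K` is *intersecting for the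
action on `k`-element subsets* if any two of its elements agree on some `k`-element subset of
the projective line. -/
def IntersectingOnSubsets (G : Type*) [Group G] (K : Type*) [Field K]
    [MulAction G (Proj K)] (k : ℕ) (F : Set G) : Prop :=
  ∀ g ∈ F, ∀ h ∈ F, ∃ S : Set (Proj K), S.ncard = k ∧ g • S = h • S

end

noncomputable section Aux

open Polynomial Matrix

variable {K : Type*} [Field K]

/-! ### generalities -/

lemma SL_smul_mk (g : Matrix.SpecialLinearGroup (Fin 2) K) (v : Fin 2 → K) (hv : v ≠ 0) :
    g • Projectivization.mk K v hv =
      Projectivization.mk K ((g : Matrix (Fin 2) (Fin 2) K).mulVec v)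
        (GLmulVec_ne_zero g.toGL hv) := by
  rw [MulAction.compHom_smul_def (Matrix.SpecialLinearGroup.toGL), GL_smul_mk]
  rfl

/-- the standard base point `[1 : 0]`. -/
def basePt : Proj K :=
  Projectivization.mk K ![1, 0] (by
    intro h; have := congrFun h 0; simp at this)

def basePt' : Proj K :=
  Projectivization.mk K ![0, 1] (by
    intro h; have := congrFun h 1; simp at this)

lemma basePt_ne_basePt' : (basePt : Proj K) ≠ basePt' := by
  rw [basePt, basePt', Ne, Projectivization.mk_eq_mk_iff]
  rintro ⟨u, hu⟩
  have := congrFun hu 0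
  simp [Units.smul_def] at this


/-! ### The Borel subgroup -/

abbrev SL2 (K : Type*) [Field K] := Matrix.SpecialLinearGroup (Fin 2) K

def BorelSub (K : Type*) [Field K] : Subgroup (SL2 K) :=
  MulAction.stabilizer (SL2 K) (basePt : Proj K)

lemma mulVec_e0 (M : Matrix (Fin 2) (Fin 2) K) :
    M.mulVec ![1, 0] = ![M 0 0, M 1 0] := by
  funext i
  fin_cases i <;> simp [Matrix.mulVec, dotProduct, Fin.sum_univ_two]

lemma mulVec_pair (M : Matrix (Fin 2) (Fin 2) K) (x y : K) :
    M.mulVec ![x, y] = ![M 0 0 * x + M 0 1 * y, M 1 0 * x + M 1 1 * y] := by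
  funext i
  fin_cases i <;> simp [Matrix.mulVec, dotProduct, Fin.sum_univ_two]

lemma sl2_det (g : SL2 K) (h10 : g.val 1 0 = 0) : g.val 0 0 * g.val 1 1 = 1 := by
  have h := g.2
  rw [Matrix.det_fin_two] at h
  linear_combination h + g.val 0 1 * h10

lemma mem_BorelSub_iff (g : SL2 K) : g ∈ BorelSub K ↔ g.val 1 0 = 0 := by
  constructor
  · intro hg
    have h : g • (basePt : Proj K) = basePt := hg
    rw [basePt, SL_smul_mk] at h
    obtain ⟨u, hu⟩ := (Projectivization.mk_eq_mk_iff ..).mp h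
    have := congrFun hu 1
    simpa [mulVec_e0, Units.smul_def] using this.symm
  · intro h10
    have hdet := sl2_det g h10
    have h00 : g.val 0 0 ≠ 0 := by
      intro h; rw [h, zero_mul] at hdet; exact zero_ne_one hdet
    show g • (basePt : Proj K) = basePt
    rw [basePt, SL_smul_mk]
    refine (Projectivization.mk_eq_mk_iff ..).mpr ?_
    refine ⟨Units.mk0 (g.val 0 0) h00, ?_⟩
    funext i
    fin_cases i <;> simp [mulVec_e0, Units.smul_def, h10]

variable (K) in
def borelEquivFun : Kˣ × K → BorelSub K := fun p =>
  ⟨⟨!![(p.1 : K), p.2; 0, ((p.1⁻¹ : Kˣ) : K)], by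
      simp [Matrix.det_fin_two_of]⟩, by
    exact (mem_BorelSub_iff _).mpr (by simp)⟩

lemma borelEquivFun_bijective : Function.Bijective (borelEquivFun K) := by
  constructor
  · rintro ⟨u, b⟩ ⟨u', b'⟩ h
    have h' : ((borelEquivFun K (u, b) : SL2 K) : Matrix (Fin 2) (Fin 2) K) =
        ((borelEquivFun K (u', b') : SL2 K) : Matrix (Fin 2) (Fin 2) K) := by rw [h]
    have h00 := congrFun (congrFun h' 0) 0
    have h01 := congrFun (congrFun h' 0) 1
    simp [borelEquivFun] at h00 h01
    exact Prod.ext (Units.ext h00) h01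
  · rintro ⟨g, hg⟩
    rw [mem_BorelSub_iff] at hg
    have hdet := sl2_det g hg
    have h00 : g.val 0 0 ≠ 0 := by
      intro h; rw [h, zero_mul] at hdet; exact zero_ne_one hdet
    refine ⟨(Units.mk0 (g.val 0 0) h00, g.val 0 1), ?_⟩
    apply Subtype.ext; apply Subtype.ext
    funext i j
    fin_cases i <;> fin_cases j <;>
      simp [borelEquivFun, hg.symm, inv_eq_of_mul_eq_one_right hdet]

lemma card_BorelSub [Fintype K] :
    Nat.card (BorelSub K) = (Fintype.card K - 1) * Fintype.card K := by
  classical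
  rw [← Nat.card_congr (Equiv.ofBijective _ borelEquivFun_bijective),
    Nat.card_eq_fintype_card, Fintype.card_prod, Fintype.card_units]

/-- Every element of the Borel subgroup fixes some 2-element subset of the
projective line setwise (char 2). -/
lemma BorelSub_fixes_pair [CharP K 2] {c : SL2 K} (hc : c ∈ BorelSub K) :
    ∃ S : Set (Proj K), S.ncard = 2 ∧ c • S = S := by
  have hcpt : c • (basePt : Proj K) = basePt := hc
  rw [mem_BorelSub_iff] at hc
  have two0 : (2 : K) = 0 := by simpa using (CharP.cast_eq_zero K 2)
  set α := c.val 0 0 with hα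
  set β := c.val 0 1 with hβ
  set δ := c.val 1 1 with hδ
  have hdet : α * δ = 1 := sl2_det c hc
  have hδ0 : δ ≠ 0 := by
    intro h; rw [h, mul_zero] at hdet; exact zero_ne_one hdet
  by_cases hαδ : α = δ
  · -- unipotent (or identity) case : α = δ = 1
    have hα1 : α = 1 := by
      have h2 : α * α = 1 := by rw [hαδ] at hdet ⊢; exact hdet
      have hsq : (α + 1) * (α + 1) = 0 := by
        linear_combination h2 + (α + 1) * two0
      rcases mul_eq_zero.mp hsq with h | h <;>
      · have h' : α = -1 := eq_neg_of_add_eq_zero_left h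
        rw [h', CharTwo.neg_eq]
    have hδ1 : δ = 1 := hαδ ▸ hα1
    by_cases hb : β = 0
    · -- c = 1
      have hc1 : c = 1 := by
        apply Subtype.ext
        funext i j
        fin_cases i <;> fin_cases j <;>
          simp [← hα, ← hβ, ← hδ, hα1, hδ1, hb, hc]
      refine ⟨{basePt, basePt'}, Set.ncard_pair basePt_ne_basePt', ?_⟩
      rw [hc1, one_smul]
    · -- transvection : swaps [0:1] and [β:1]
      have hvz : (![β, 1] : Fin 2 → K) ≠ 0 := by
        intro h; have := congrFun h 1; simp at this
      set z : Proj K := Projectivization.mk K ![β, 1] hvz with hz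
      have hcy : c • (basePt' : Proj K) = z := by
        rw [basePt', hz, SL_smul_mk]
        refine (Projectivization.mk_eq_mk_iff ..).mpr ?_
        refine ⟨1, funext fun i => ?_⟩
        fin_cases i <;>
          simp [mulVec_pair, Units.smul_def, ← hα, ← hβ, ← hδ, hα1, hδ1, hc]
      have hcz : c • z = basePt' := by
        rw [basePt', hz, SL_smul_mk]
        refine (Projectivization.mk_eq_mk_iff ..).mpr ?_
        refine ⟨1, funext fun i => ?_⟩
        fin_cases i <;>
          simp [mulVec_pair, Units.smul_def, ← hα, ← hβ, ← hδ, hα1, hδ1, hc]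
        linear_combination (-β) * two0
      have hne : (basePt' : Proj K) ≠ z := by
        rw [basePt', hz, Ne, Projectivization.mk_eq_mk_iff]
        rintro ⟨u, hu⟩
        have h0 := congrFun hu 0
        have h1 := congrFun hu 1
        simp [Units.smul_def] at h0 h1
        exact hb h0
      refine ⟨{basePt', z}, Set.ncard_pair hne, ?_⟩
      rw [Set.smul_set_insert, Set.smul_set_singleton, hcy, hcz, Set.pair_comm]
  · -- split semisimple case : two fixed points
    have hsub : δ - α ≠ 0 := sub_ne_zero.mpr (Ne.symm hαδ)
    set x := β / (δ - α) with hx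
    have hxx : (δ - α) * x = β := by
      rw [hx]; field_simp
    have hvy : (![x, 1] : Fin 2 → K) ≠ 0 := by
      intro h; have := congrFun h 1; simp at this
    set y : Proj K := Projectivization.mk K ![x, 1] hvy with hy
    have hcy : c • y = y := by
      rw [hy, SL_smul_mk]
      refine (Projectivization.mk_eq_mk_iff ..).mpr ?_
      refine ⟨Units.mk0 δ hδ0, funext fun i => ?_⟩
      fin_cases i <;>
        simp [mulVec_pair, Units.smul_def, ← hα, ← hβ, ← hδ, hc]
      linear_combination hxx
    have hne : (basePt : Proj K) ≠ y := by
      rw [basePt, hy, Ne, Projectivization.mk_eq_mk_iff]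
      rintro ⟨u, hu⟩
      have := congrFun hu 1
      simp [Units.smul_def] at this
    refine ⟨{basePt, y}, Set.ncard_pair hne, ?_⟩
    rw [Set.smul_set_insert, Set.smul_set_singleton, hcy, hcpt]


/-! ### An anisotropic torus -/

lemma exists_irreducible_coeff [Fintype K] [CharP K 2] :
    ∃ a : K, ∀ t : K, t ^ 2 + a * t + 1 ≠ 0 := by
  by_contra hcon
  push_neg at hcon
  classical
  have hsurj : Function.Surjective (fun u : Kˣ => (u : K) + ((u⁻¹ : Kˣ) : K)) := by
    intro a
    obtain ⟨t, ht⟩ := hcon a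
    have ht0 : t ≠ 0 := by
      rintro rfl; simp at ht
    refine ⟨Units.mk0 t ht0, ?_⟩
    have h2 : (2 : K) = 0 := by
      simpa using (CharP.cast_eq_zero K 2)
    show ((Units.mk0 t ht0 : Kˣ) : K) + (((Units.mk0 t ht0)⁻¹ : Kˣ) : K) = a
    rw [Units.val_inv_eq_inv_val, Units.val_mk0]
    apply mul_left_cancel₀ ht0
    rw [mul_add, mul_inv_cancel₀ ht0]
    linear_combination ht - (a * t) * h2
  have hle := Fintype.card_le_of_surjective _ hsurj
  rw [Fintype.card_units] at hle
  have h2 : 2 ≤ Fintype.card K := Fintype.one_lt_card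
  omega

section Torus

variable (a : K)

def qpoly : K[X] := X ^ 2 + C a * X + 1

lemma qpoly_natDegree : (qpoly a).natDegree = 2 := by
  unfold qpoly; compute_degree!

lemma qpoly_ne_zero : qpoly a ≠ 0 := by
  intro h
  have := qpoly_natDegree a
  rw [h] at this
  simp at this

variable {a} (ha : ∀ t : K, t ^ 2 + a * t + 1 ≠ 0)
include ha

lemma qpoly_irreducible : Irreducible (qpoly a) := by
  rw [irreducible_iff_roots_eq_zero_of_degree_le_three (by rw [qpoly_natDegree])
    (by rw [qpoly_natDegree]; omega)]
  rw [Multiset.eq_zero_iff_forall_notMem]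
  intro t ht
  rw [mem_roots (qpoly_ne_zero a), IsRoot, qpoly] at ht
  simp only [eval_add, eval_pow, eval_X, eval_mul, eval_C, eval_one] at ht
  exact ha t ht

omit ha in
/-- The key existence result: an "anisotropic torus" in `SL(2,K)`, a subgroup of
order `q+1` all of whose nontrivial elements act without fixed points on the
projective line, and which contains no element of order 2. -/
lemma exists_torus (K : Type*) [Field K] [Fintype K] [CharP K 2] :
    ∃ C : Subgroup (SL2 K),
      Nat.card C = Fintype.card K + 1 ∧
      ∀ c ∈ C, c ≠ 1 → (∀ y : Proj K, c • y ≠ y) ∧ c * c ≠ 1 := by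
  classical
  obtain ⟨a, ha⟩ := exists_irreducible_coeff (K := K)
  haveI : Fact (Irreducible (qpoly a)) := ⟨qpoly_irreducible ha⟩
  set q := Fintype.card K with hq
  have hq2 : 2 ≤ q := Fintype.one_lt_card
  have hqeven : Even q := by
    obtain ⟨n, hp, hn⟩ := FiniteField.card K 2
    rw [hq, hn, even_iff_two_dvd]
    exact dvd_pow_self 2 n.pos.ne'
  set L := AdjoinRoot (qpoly a) with hL
  -- basis of L over K
  have hdim : (AdjoinRoot.powerBasis (qpoly_ne_zero a)).dim = 2 := by
    rw [AdjoinRoot.powerBasis_dim, qpoly_natDegree]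
  let b : Module.Basis (Fin 2) K L :=
    (AdjoinRoot.powerBasis (qpoly_ne_zero a)).basis.reindex (finCongr hdim)
  haveI : Finite L := Finite.of_equiv _ b.equivFun.toEquiv.symm
  haveI : Fintype L := Fintype.ofFinite L
  haveI : CharP L 2 := charP_of_injective_algebraMap (algebraMap K L).injective 2
  have hcardL : Fintype.card L = q ^ 2 := by
    rw [← Nat.card_eq_fintype_card, Nat.card_congr b.equivFun.toEquiv, Nat.card_eq_fintype_card,
      Fintype.card_fun, Fintype.card_fin]
  have hcardLu : Fintype.card Lˣ = q ^ 2 - 1 := by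
    rw [Fintype.card_units, hcardL]
  -- arithmetic identities
  have hqsq : q ^ 2 - 1 = (q - 1) * (q + 1) := by
    have h1 : q ^ 2 = q * q := sq q
    rw [h1, Nat.sub_eq_iff_eq_add (by nlinarith)]
    obtain ⟨r, hr⟩ := Nat.exists_eq_add_of_le hq2
    have h3 : q - 1 = r + 1 := by omega
    have h4 : 2 + r - 1 = r + 1 := by omega
    rw [hr, h4]
    ring
  -- small lemma : units of K with u^(q+1) = 1 are trivial
  have hKunit : ∀ u : Kˣ, u ^ (q + 1) = 1 → u = 1 := by
    intro u hu
    have h1 : orderOf u ∣ q + 1 := orderOf_dvd_of_pow_eq_one hu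
    have h2 : orderOf u ∣ q - 1 := by
      apply orderOf_dvd_of_pow_eq_one
      rw [← Fintype.card_units (α := K)]
      exact pow_card_eq_one
    have h3 : orderOf u ∣ 2 := by
      have := Nat.dvd_sub h1 h2
      rwa [show q + 1 - (q - 1) = 2 by omega] at this
    have h4 : orderOf u = 1 := by
      rcases (Nat.dvd_prime Nat.prime_two).mp h3 with h | h
      · exact h
      · exfalso
        have := h ▸ h2
        obtain ⟨k, hk⟩ := this
        obtain ⟨l, hl⟩ := hqeven
        omega
    exact orderOf_eq_one_iff.mp h4
  -- a primitive (q+1)-st root of unity in L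
  obtain ⟨g, hg⟩ := IsCyclic.exists_ofOrder_eq_natCard (α := Lˣ)
  rw [Nat.card_eq_fintype_card, hcardLu] at hg
  have hdvd : q - 1 ∣ q ^ 2 - 1 := ⟨q + 1, hqsq⟩
  have hordζ : orderOf (g ^ (q - 1)) = q + 1 := by
    rw [orderOf_pow, hg, Nat.gcd_eq_right hdvd, hqsq,
      Nat.mul_div_cancel_left _ (by omega)]
  haveI : NeZero (q + 1) := ⟨by omega⟩
  have hprim : IsPrimitiveRoot (g ^ (q - 1)) (q + 1) := by
    have := IsPrimitiveRoot.orderOf (g ^ (q - 1))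
    rwa [hordζ] at this
  have hcardrou : Nat.card (rootsOfUnity (q + 1) L) = q + 1 := by
    exact hprim.card_rootsOfUnity'
  -- norm-one property
  have hnorm : ∀ x : Lˣ, x ∈ rootsOfUnity (q + 1) L → Algebra.norm K ((x : Lˣ) : L) = 1 := by
    intro x hx
    rw [mem_rootsOfUnity] at hx
    set N : Kˣ := Units.map (Algebra.norm K (S := L)) x with hN
    have h1 : N ^ (q + 1) = 1 := by
      rw [hN, ← _root_.map_pow, hx, _root_.map_one]
    have : N = 1 := hKunit N h1
    have := congrArg (Units.val) this
    rwa [hN, Units.coe_map] at this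
  -- the map into SL(2,K)
  let φ : L →ₐ[K] Matrix (Fin 2) (Fin 2) K := Algebra.leftMulMatrix b
  have hdet : ∀ x : Lˣ, x ∈ rootsOfUnity (q + 1) L →
      (φ ((x : Lˣ) : L)).det = 1 := by
    intro x hx
    rw [← Algebra.norm_eq_matrix_det b]
    exact hnorm x hx
  let ψ : rootsOfUnity (q + 1) L →* SL2 K :=
    MonoidHom.mk' (fun x => ⟨φ ((x : Lˣ) : L), hdet x.1 x.2⟩)
      (by
        intro x y
        apply Subtype.ext
        show φ (((x * y : rootsOfUnity (q + 1) L) : Lˣ) : L) =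
          φ ((x : Lˣ) : L) * φ ((y : Lˣ) : L)
        rw [Subgroup.coe_mul, Units.val_mul, _root_.map_mul])
  have hψinj : Function.Injective ψ := by
    intro x y hxy
    have h1 : φ ((x : Lˣ) : L) = φ ((y : Lˣ) : L) := congrArg Subtype.val hxy
    have h2 := Algebra.leftMulMatrix_injective b h1
    exact Subtype.ext (Units.ext h2)
  -- elements not equal to 1 are not in the image of K
  have hnotK : ∀ x : Lˣ, x ∈ rootsOfUnity (q + 1) L → (x : Lˣ) ≠ 1 →
      ∀ u : K, ((x : Lˣ) : L) ≠ algebraMap K L u := by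
    intro x hx hx1 u hux
    have hu0 : u ≠ 0 := by
      rintro rfl
      rw [_root_.map_zero] at hux
      exact (Units.ne_zero (x : Lˣ)) hux
    rw [mem_rootsOfUnity] at hx
    have hpow : (algebraMap K L u) ^ (q + 1) = 1 := by
      rw [← hux]
      have := congrArg (Units.val) hx
      rwa [Units.val_pow_eq_pow_val, Units.val_one] at this
    have hupow : u ^ (q + 1) = 1 := by
      apply (algebraMap K L).injective
      rw [_root_.map_pow, _root_.map_one]
      exact hpow
    have : Units.mk0 u hu0 = 1 := by
      apply hKunit
      apply Units.ext
      rw [Units.val_pow_eq_pow_val, Units.val_one, Units.val_mk0]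
      exact hupow
    have hu1 : u = 1 := by
      have := congrArg Units.val this
      simpa using this
    apply hx1
    apply Units.ext
    rw [hux, hu1, _root_.map_one, Units.val_one]
  -- fixed-point freeness
  have hfpf : ∀ x : rootsOfUnity (q + 1) L, (x : Lˣ) ≠ 1 →
      ∀ y : Proj K, ψ x • y ≠ y := by
    intro x hx1 y
    induction y using Projectivization.ind with
    | h v hv =>
      intro hy
      rw [SL_smul_mk] at hy
      obtain ⟨u, hu⟩ := (Projectivization.mk_eq_mk_iff ..).mp hy
      set t : L := ((x : Lˣ) : L) with ht
      set w : L := b.equivFun.symm v with hwdef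
      have hvw : ⇑(b.repr w) = v := by
        rw [show ⇑(b.repr w) = b.equivFun w from rfl, hwdef,
          LinearEquiv.apply_symm_apply]
      have hw0 : w ≠ 0 := by
        intro h
        apply hv
        rw [← hvw, h, _root_.map_zero]
        rfl
      have hkey : ((ψ x : SL2 K) : Matrix (Fin 2) (Fin 2) K).mulVec v = ⇑(b.repr (t * w)) := by
        rw [← hvw]
        exact Algebra.leftMulMatrix_mulVec_repr b t w
      have h1 : b.repr (t * w) = b.repr ((u : K) • w) := by
        ext i
        rw [_root_.map_smul]
        have h2 := congrFun hu i
        rw [hkey] at h2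
        rw [← h2, ← hvw]
        simp [Units.smul_def]
      have h3 : t * w = algebraMap K L (u : K) * w := by
        have := b.repr.injective h1
        rwa [Algebra.smul_def] at this
      have h4 : t = algebraMap K L (u : K) := mul_right_cancel₀ hw0 h3
      exact hnotK (x : Lˣ) x.2 hx1 (u : K) h4
  -- assembling the subgroup
  refine ⟨ψ.range, ?_, ?_⟩
  · exact (Nat.card_congr (Equiv.ofInjective _ hψinj).symm).trans hcardrou
  · rintro c ⟨x, rfl⟩ hc1
    have hx1 : (x : Lˣ) ≠ 1 := by
      intro h
      apply hc1
      have hx' : x = 1 := by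
        apply Subtype.ext; exact h
      rw [hx', _root_.map_one]
    refine ⟨hfpf x hx1, ?_⟩
    intro hsq
    rw [← _root_.map_mul] at hsq
    have hxx : x * x = 1 := hψinj (by rw [hsq, _root_.map_one])
    have hxxL : ((x : Lˣ) : L) * ((x : Lˣ) : L) = 1 := by
      rw [← Units.val_mul, ← Subgroup.coe_mul, hxx]
      simp
    set t : L := ((x : Lˣ) : L) with ht
    have two0L : (2 : L) = 0 := by simpa using (CharP.cast_eq_zero L 2)
    have hsq0 : (t + 1) * (t + 1) = 0 := by
      linear_combination hxxL + (t + 1) * two0L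
    have ht1 : t = 1 := by
      rcases mul_eq_zero.mp hsq0 with h | h <;>
      · have h' : t = -1 := eq_neg_of_add_eq_zero_left h
        rw [h', CharTwo.neg_eq]
    exact hx1 (Units.ext (by rw [← ht]; exact ht1.trans Units.val_one.symm))


end Torus

/-! ### Cardinality of `SL(2,K)` -/

section CardSL
variable (K : Type*) [Field K] [Fintype K] [DecidableEq K]

def glDiag (u : Kˣ) : GL (Fin 2) K :=
  ⟨!![(u : K), 0; 0, 1], !![((u⁻¹ : Kˣ) : K), 0; 0, 1],
    by
      ext i j
      fin_cases i <;> fin_cases j <;>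
        simp [Matrix.mul_apply, Fin.sum_univ_two, Matrix.one_apply],
    by
      ext i j
      fin_cases i <;> fin_cases j <;>
        simp [Matrix.mul_apply, Fin.sum_univ_two, Matrix.one_apply]⟩

lemma det_surjective :
    Function.Surjective (Matrix.GeneralLinearGroup.det : GL (Fin 2) K →* Kˣ) := by
  intro u
  refine ⟨glDiag K u, Units.ext ?_⟩
  show ((glDiag K u) : Matrix (Fin 2) (Fin 2) K).det = (u : K)
  simp [glDiag, Matrix.det_fin_two_of]

def slEquivKer : SL2 K ≃
    ↥(Matrix.GeneralLinearGroup.det : GL (Fin 2) K →* Kˣ).ker where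
  toFun g := ⟨Matrix.SpecialLinearGroup.toGL g, by
    rw [MonoidHom.mem_ker]
    exact Units.ext g.2⟩
  invFun x := ⟨((x : GL (Fin 2) K) : Matrix (Fin 2) (Fin 2) K), by
    have h := x.2
    rw [MonoidHom.mem_ker] at h
    exact congrArg Units.val h⟩
  left_inv g := rfl
  right_inv x := by
    apply Subtype.ext
    apply Units.ext
    rfl

lemma card_SL2 :
    (Fintype.card K - 1) * Nat.card (SL2 K) =
      (Fintype.card K ^ 2 - 1) * (Fintype.card K ^ 2 - Fintype.card K) := by
  have hGL := Matrix.card_GL_field (𝔽 := K) 2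
  have h1 : Nat.card (GL (Fin 2) K) =
      (Fintype.card K ^ 2 - 1) * (Fintype.card K ^ 2 - Fintype.card K) := by
    rw [hGL, Fin.prod_univ_two]
    simp [pow_one]
  have h2 := Subgroup.card_eq_card_quotient_mul_card_subgroup
    (Matrix.GeneralLinearGroup.det : GL (Fin 2) K →* Kˣ).ker
  have h3 : Nat.card (GL (Fin 2) K ⧸ (Matrix.GeneralLinearGroup.det :
      GL (Fin 2) K →* Kˣ).ker) = Fintype.card K - 1 := by
    rw [Nat.card_congr (QuotientGroup.quotientKerEquivOfSurjective _
      (det_surjective K)).toEquiv, Nat.card_eq_fintype_card, Fintype.card_units]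
  have h4 : Nat.card (SL2 K) = Nat.card
      ↥(Matrix.GeneralLinearGroup.det : GL (Fin 2) K →* Kˣ).ker :=
    Nat.card_congr (slEquivKer K)
  rw [h4, ← h3, ← h2, h1]

end CardSL

end Aux


/-- For `q = 2^m` with `m ≥ 1`, the maximum size of an intersecting subset of
`SL(2, F_q) ≅ PSL(2, q) = PGL(2, q)` for the action on 2-element subsets of the projective line
is exactly `q(q-1)`. -/
theorem max_intersecting_sl2_two_subsets_power_of_two (m : ℕ) (hm : 1 ≤ m) :
    IsGreatest {n : ℕ |
        ∃ F : Set (Matrix.SpecialLinearGroup (Fin 2) (GaloisField 2 m)),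
          IntersectingOnSubsets _ (GaloisField 2 m) 2 F ∧ F.ncard = n}
      (2 ^ m * (2 ^ m - 1)) := by
  classical
  set K := GaloisField 2 m with hK
  letI : Fintype K := Fintype.ofFinite K
  have hm0 : m ≠ 0 := by omega
  have hq : Fintype.card K = 2 ^ m := by
    rw [← Nat.card_eq_fintype_card]
    exact GaloisField.card 2 m hm0
  set q := Fintype.card K with hqdef
  have hq2 : 2 ≤ q := Fintype.one_lt_card
  have e1 : q ^ 2 - 1 = (q - 1) * (q + 1) := by
    rw [sq, Nat.sub_eq_iff_eq_add (by nlinarith)]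
    obtain ⟨r, hr⟩ := Nat.exists_eq_add_of_le hq2
    rw [hr, show 2 + r - 1 = r + 1 by omega]; ring
  have e2 : q ^ 2 - q = q * (q - 1) := by
    rw [sq, Nat.sub_eq_iff_eq_add (by nlinarith)]
    obtain ⟨r, hr⟩ := Nat.exists_eq_add_of_le hq2
    rw [hr, show 2 + r - 1 = r + 1 by omega]; ring
  constructor
  · -- the Borel subgroup is a maximum intersecting set
    refine ⟨(BorelSub K : Set (SL2 K)), ?_, ?_⟩
    · intro g hg h hh
      have hc : h⁻¹ * g ∈ BorelSub K := mul_mem (inv_mem hh) hg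
      obtain ⟨S, hS2, hcS⟩ := BorelSub_fixes_pair hc
      refine ⟨S, hS2, ?_⟩
      have hg' : g = h * (h⁻¹ * g) := by group
      rw [hg', mul_smul, hcS]
    · rw [← Nat.card_coe_set_eq]
      have : Nat.card ↥(BorelSub K : Set (SL2 K)) = Nat.card (BorelSub K) := rfl
      rw [this, card_BorelSub, ← hqdef, hq]
      ring
  · -- upper bound via the torus
    rintro n ⟨F, hF, rfl⟩
    obtain ⟨C, hCcard, hCprop⟩ := exists_torus K
    have hinj : Function.Injective (fun x : F => (QuotientGroup.mk x.1 : SL2 K ⧸ C)) := by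
      rintro ⟨g, hgF⟩ ⟨h, hhF⟩ hgh
      have hc : g⁻¹ * h ∈ C := QuotientGroup.eq.mp hgh
      by_contra hne
      have hne' : g ≠ h := fun h' => hne (Subtype.ext h')
      have hcne : g⁻¹ * h ≠ 1 := by
        intro h'
        exact hne' (by
          have := congrArg (g * ·) h'
          simpa [mul_assoc] using this.symm)
      obtain ⟨S, hS2, hghS⟩ := hF g hgF h hhF
      set c := g⁻¹ * h with hcdef
      have hcS : c • S = S := by
        rw [hcdef, mul_smul, ← hghS, inv_smul_smul]
      obtain ⟨y0, z0, hyz, rfl⟩ := Set.ncard_eq_two.mp hS2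
      obtain ⟨hfp, hsq⟩ := hCprop c hc hcne
      have h1 : c • y0 ∈ ({y0, z0} : Set (Proj K)) := by
        rw [← hcS]
        exact Set.smul_mem_smul_set (by simp)
      have h2 : c • z0 ∈ ({y0, z0} : Set (Proj K)) := by
        rw [← hcS]
        exact Set.smul_mem_smul_set (by simp)
      have hcy : c • y0 = z0 := by
        rcases h1 with h1 | h1
        · exact absurd h1 (hfp y0)
        · exact h1
      have hcz : c • z0 = y0 := by
        rcases h2 with h2 | h2
        · exact h2
        · exact absurd h2 (hfp z0)
      have hccy : (c * c) • y0 = y0 := by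
        rw [mul_smul, hcy, hcz]
      exact (hCprop (c * c) (mul_mem hc hc) hsq).1 y0 hccy
    have hle : F.ncard ≤ Nat.card (SL2 K ⧸ C) := by
      rw [← Nat.card_coe_set_eq]
      exact Nat.card_le_card_of_injective _ hinj
    -- compute the index
    have hidx := Subgroup.index_mul_card C
    rw [hCcard, ← hqdef] at hidx
    have hSL := card_SL2 K
    rw [← hqdef] at hSL
    have hXpos : 0 < (q - 1) * (q + 1) := by
      have : 1 ≤ q - 1 := by omega
      positivity
    have key : C.index * ((q - 1) * (q + 1)) = (q * (q - 1)) * ((q - 1) * (q + 1)) := by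
      calc C.index * ((q - 1) * (q + 1)) = (q - 1) * (C.index * (q + 1)) := by ring
        _ = (q - 1) * Nat.card (SL2 K) := by rw [hidx]
        _ = (q ^ 2 - 1) * (q ^ 2 - q) := hSL
        _ = ((q - 1) * (q + 1)) * (q * (q - 1)) := by rw [e1, e2]
        _ = (q * (q - 1)) * ((q - 1) * (q + 1)) := by ring
    have hidx2 : C.index = q * (q - 1) := Nat.eq_of_mul_eq_mul_right hXpos key
    rw [← Subgroup.index_eq_card] at hle
    rw [hidx2, hq] at hle
    exact hle
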